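/- arXiv:1810.04727 — 3 statements merged into one kernel-verified Lean document; each statement's English description precedes it below -/
import Mathlib

section
/- For any genomic tableau T of shape λ, the regularization algorithm terminates, and its output reg(T) is a quasiYamanouchi genomic tableau of shape λ; that is, regularization is a well-defined map reg : Gen(λ) → QYGen(λ). -/
open scoped Classical

/-- The cell `x = (row, column)` (0-indexed, English orientation) lies in the Young diagram
whose `r`-th row has length `lam r`. -/
def InShape (lam : ℕ → ℕ) (x : ℕ × ℕ) : Prop := x.2 < lam x.1

/-- `lam : ℕ → ℕ` is the row-length function of a partition: weakly decreasing and
eventually zero. -/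
def IsPartitionFn (lam : ℕ → ℕ) : Prop := Antitone lam ∧ ∃ N, ∀ n, N ≤ n → lam n = 0

/-- A genomic tableau of shape `lam`: a semistandard filling (positive entries, rows weakly
increasing left-to-right, columns strictly increasing top-to-bottom) together with, for each
`i`, a partition of the boxes labeled `i` into genes, encoded by the relation `sameGene`.
Boxes in a common gene share their entry; if a gene has boxes (necessarily with a common
entry) in columns `c₁ < c₃`, then every box with the same entry in an intervening column
belongs to the same gene; and no gene has two boxes in a common row.  Entries and the
relation are normalized (to `0`, resp. `False`) outside the shape so that equality of
structures agrees with equality of tableaux. -/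
structure GenomicTableau (lam : ℕ → ℕ) where
  entry : ℕ × ℕ → ℕ
  sameGene : ℕ × ℕ → ℕ × ℕ → Prop
  entry_pos : ∀ x, InShape lam x → 0 < entry x
  entry_zero : ∀ x, ¬ InShape lam x → entry x = 0
  row_weak : ∀ r c₁ c₂, c₁ ≤ c₂ → InShape lam (r, c₂) → entry (r, c₁) ≤ entry (r, c₂)
  col_strict : ∀ r₁ r₂ c, r₁ < r₂ → InShape lam (r₂, c) → entry (r₁, c) < entry (r₂, c)
  sameGene_mem : ∀ x y, sameGene x y → InShape lam x ∧ InShape lam y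
  sameGene_refl : ∀ x, InShape lam x → sameGene x x
  sameGene_symm : ∀ x y, sameGene x y → sameGene y x
  sameGene_trans : ∀ x y z, sameGene x y → sameGene y z → sameGene x z
  sameGene_entry : ∀ x y, sameGene x y → entry x = entry y
  sameGene_interval : ∀ x y z, sameGene x z → InShape lam y → entry y = entry x →
    x.2 < y.2 → y.2 < z.2 → sameGene x y
  sameGene_row : ∀ x y, sameGene x y → x.1 = y.1 → x = y

/-- `x` is the leftmost box of its gene in the genomic tableau `T`. -/
def IsGeneLeader {lam : ℕ → ℕ} (T : GenomicTableau lam) (x : ℕ × ℕ) : Prop :=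
  InShape lam x ∧ ∀ y, T.sameGene x y → x.2 ≤ y.2

/-- The number of `(n+1)`-genes of `T` (counted via their leftmost boxes).  Thus `wt T` is
the weight of `T` as a weak composition indexed from `0`: the variable `x_n` records
`(n+1)`-genes. -/
noncomputable def wt {lam : ℕ → ℕ} (T : GenomicTableau lam) (n : ℕ) : ℕ :=
  {x | IsGeneLeader T x ∧ T.entry x = n + 1}.ncard

/-- The largest entry of the genomic tableau `T`. -/
noncomputable def maxEntry {lam : ℕ → ℕ} (T : GenomicTableau lam) : ℕ :=
  sSup {n | ∃ x, InShape lam x ∧ T.entry x = n}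

/-- The positive part of the weight of `T`: the list of nonzero components of `wt T`,
in order. -/
noncomputable def wtPos {lam : ℕ → ℕ} (T : GenomicTableau lam) : List ℕ :=
  ((List.range (maxEntry T)).map (wt T)).filter (fun e => decide (0 < e))

/-- The (strong) composition `β` refines `α` if `α` is obtained from `β` by summing
consecutive blocks. -/
def Refines (β α : List ℕ) : Prop :=
  ∃ L : List (List ℕ), L.flatten = β ∧ L.map List.sum = α

/-- The positive part of a weak composition `m`: the list of its nonzero values in order of
the index. -/
noncomputable def posPart (m : ℕ →₀ ℕ) : List ℕ :=
  (m.support.sort (· ≤ ·)).map (fun i => m i)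

/-- The fundamental quasisymmetric function `F_α`, a power series in variables indexed
by `ℕ`: the sum of `x^m` over all weak compositions `m` whose positive part refines `α`. -/
noncomputable def fundamentalF (α : List ℕ) : MvPowerSeries ℕ ℤ :=
  fun m : ℕ →₀ ℕ => if Refines (posPart m) α then 1 else 0

/-- The genomic Schur function `U_lam`: the coefficient of `x^m` is the number of genomic
tableaux of shape `lam` with weight `m`. -/
noncomputable def genomicSchur (lam : ℕ → ℕ) : MvPowerSeries ℕ ℤ :=
  fun m : ℕ →₀ ℕ => (Nat.card {T : GenomicTableau lam // ∀ n, wt T n = m n} : ℤ)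

/-- A genomic tableau is quasiYamanouchi if for every `i > 1` appearing in it, some
instance of `i` is weakly west of some instance of `i-1`. -/
def IsQY {lam : ℕ → ℕ} (T : GenomicTableau lam) : Prop :=
  ∀ i, 2 ≤ i → (∃ x, InShape lam x ∧ T.entry x = i) →
    ∃ x y, InShape lam x ∧ InShape lam y ∧
      T.entry x = i ∧ T.entry y = i - 1 ∧ x.2 ≤ y.2

/-- One step of the regularization algorithm: if `i ≥ 2` appears in `T` and every box
labeled `i` is strictly east of every box labeled `i-1`, replace every label `i` by `i-1`,
keeping the gene decomposition. -/
def RegStep {lam : ℕ → ℕ} (T T' : GenomicTableau lam) : Prop :=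
  ∃ i, 2 ≤ i ∧ (∃ x, InShape lam x ∧ T.entry x = i) ∧
    (∀ x y, InShape lam x → InShape lam y → T.entry x = i → T.entry y = i - 1 → y.2 < x.2) ∧
    (∀ x, T'.entry x = if T.entry x = i then i - 1 else T.entry x) ∧
    (∀ x y, T'.sameGene x y ↔ T.sameGene x y)

/-- An increasing tableau of shape `lam`: positive entries, strictly increasing along rows
and down columns, normalized to `0` outside the shape. -/
structure IncreasingTableau (lam : ℕ → ℕ) where
  entry : ℕ × ℕ → ℕ
  entry_pos : ∀ x, InShape lam x → 0 < entry x
  entry_zero : ∀ x, ¬ InShape lam x → entry x = 0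
  row_strict : ∀ r c₁ c₂, c₁ < c₂ → InShape lam (r, c₂) → entry (r, c₁) < entry (r, c₂)
  col_strict : ∀ r₁ r₂ c, r₁ < r₂ → InShape lam (r₂, c) → entry (r₁, c) < entry (r₂, c)

/-- The largest entry of the increasing tableau `T`. -/
noncomputable def maxEntryInc {lam : ℕ → ℕ} (T : IncreasingTableau lam) : ℕ :=
  sSup {n | ∃ x, InShape lam x ∧ T.entry x = n}

/-- An increasing tableau is gapless if its set of entries is `{1, …, n}` for some `n`. -/
def Gapless {lam : ℕ → ℕ} (T : IncreasingTableau lam) : Prop :=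
  ∀ i, 0 < i → i ≤ maxEntryInc T → ∃ x, InShape lam x ∧ T.entry x = i

/-- `i` is a descent of the increasing tableau `T` if some instance of `i` lies in a
strictly higher row than some instance of `i+1`. -/
def IsDescent {lam : ℕ → ℕ} (T : IncreasingTableau lam) (i : ℕ) : Prop :=
  ∃ x y, InShape lam x ∧ InShape lam y ∧ T.entry x = i ∧ T.entry y = i + 1 ∧ x.1 < y.1

/-- The descent composition of a gapless increasing tableau with entries `{1, …, n}`:
the lengths of the segments of the word `1 2 ⋯ n` cut after each descent. -/
noncomputable def descComp {lam : ℕ → ℕ} (T : IncreasingTableau lam) : List ℕ :=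
  let n := maxEntryInc T
  let ds := (((Finset.range n).filter fun i => IsDescent T i).sort (· ≤ ·)) ++ [n]
  (ds.zip (0 :: ds)).map fun p => p.1 - p.2

/-- A standard Young tableau, viewed as an increasing tableau: gapless with all entries
distinct (so the entries are `1, …, |lam|`, each exactly once). -/
def IsStandard {lam : ℕ → ℕ} (T : IncreasingTableau lam) : Prop :=
  Gapless T ∧ ∀ x y, InShape lam x → InShape lam y → T.entry x = T.entry y → x = y

/-- The column of the leftmost box of the gene of `x` in `T`. -/
noncomputable def leadCol {lam : ℕ → ℕ} (T : GenomicTableau lam) (x : ℕ × ℕ) : ℕ :=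
  sInf {c | ∃ y, T.sameGene x y ∧ y.2 = c}

/-- K-standardization `Φ`: order the genes of `T` by listing the `1`-genes left to right,
then the `2`-genes left to right, and so on; `kStd T x` is the (1-based) position of the
gene of `x` in this order (and `0` outside the shape). -/
noncomputable def kStd {lam : ℕ → ℕ} (T : GenomicTableau lam) (x : ℕ × ℕ) : ℕ :=
  if InShape lam x then
    {y | IsGeneLeader T y ∧ (T.entry y < T.entry x ∨
        (T.entry y = T.entry x ∧ y.2 ≤ leadCol T x))}.ncard
  else 0

/-- A semistandard tableau of shape `lam`, with positive entries, normalized to `0`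
outside the shape. -/
structure SemistandardTableau (lam : ℕ → ℕ) where
  entry : ℕ × ℕ → ℕ
  entry_pos : ∀ x, InShape lam x → 0 < entry x
  entry_zero : ∀ x, ¬ InShape lam x → entry x = 0
  row_weak : ∀ r c₁ c₂, c₁ ≤ c₂ → InShape lam (r, c₂) → entry (r, c₁) ≤ entry (r, c₂)
  col_strict : ∀ r₁ r₂ c, r₁ < r₂ → InShape lam (r₂, c) → entry (r₁, c) < entry (r₂, c)

/-- The number of boxes of `T` with entry `n+1` (matching the variable convention of
`wt`: the variable `x_n` records the entry `n+1`). -/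
noncomputable def contentOf {lam : ℕ → ℕ} (T : SemistandardTableau lam) (n : ℕ) : ℕ :=
  {x | InShape lam x ∧ T.entry x = n + 1}.ncard

/-- The Schur function `s_mu` as the generating function of semistandard tableaux of
shape `mu` by content. -/
noncomputable def schurFn (mu : ℕ → ℕ) : MvPowerSeries ℕ ℤ :=
  fun m : ℕ →₀ ℕ => (Nat.card {T : SemistandardTableau mu // ∀ n, contentOf T n = m n} : ℤ)

/-- The row-length function of the flag-shaped partition `(a, b, 1^k)`. -/
def flagShape (a b k : ℕ) : ℕ → ℕ :=
  fun r => if r = 0 then a else if r = 1 then b else if r < k + 2 then 1 else 0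

/-- The homogeneous component of degree `d` of a power series. -/
noncomputable def homComponent (d : ℕ) (f : MvPowerSeries ℕ ℤ) : MvPowerSeries ℕ ℤ :=
  fun m : ℕ →₀ ℕ => if (m.sum fun _ e => e) = d then MvPowerSeries.coeff m f else 0

/-- The complete homogeneous symmetric function `h_k` (`h_0 = 1`, and `h_k = 0` for
`k < 0`): the sum of all monomials of total degree `k`. -/
noncomputable def hSeries (k : ℤ) : MvPowerSeries ℕ ℤ :=
  fun m : ℕ →₀ ℕ => if ((m.sum fun _ e => e : ℕ) : ℤ) = k then 1 else 0

/-- The Schur function of an arbitrary (strong) composition `α`, via the Jacobi–Trudi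
determinant `s_α = det(h_{α_i - i + j})`. -/
noncomputable def schurComp (α : List ℕ) : MvPowerSeries ℕ ℤ :=
  Matrix.det (Matrix.of fun i j : Fin α.length =>
    hSeries ((α.get i : ℤ) - (i : ℕ) + (j : ℕ)))

/-- `e` lies in the `i`-th block (0-indexed) `M_{i+1}(α) = {α_1 + ⋯ + α_i + 1, …,
α_1 + ⋯ + α_{i+1}}` of the composition `α`. -/
def InBlock (α : List ℕ) (i : ℕ) (e : ℕ) : Prop :=
  (α.take i).sum < e ∧ e ≤ (α.take (i + 1)).sum

/-- The positive part of a weak composition of length `n`. -/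
noncomputable def posPartFin {n : ℕ} (m : Fin n →₀ ℕ) : List ℕ :=
  (List.ofFn fun k : Fin n => m k).filter (fun e => decide (0 < e))

/-- The fundamental quasisymmetric polynomial `F_α(x_1, …, x_n)` in `n` variables. -/
noncomputable def fundamentalFFin (n : ℕ) (α : List ℕ) : MvPowerSeries (Fin n) ℤ :=
  fun m : Fin n →₀ ℕ => if Refines (posPartFin m) α then 1 else 0

/-- The genomic Schur polynomial `U_lam(x_1, …, x_n)`: the generating function of genomic
tableaux with all entries at most `n`, by weight. -/
noncomputable def genomicSchurPoly (lam : ℕ → ℕ) (n : ℕ) : MvPowerSeries (Fin n) ℤ :=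
  fun m : Fin n →₀ ℕ =>
    (Nat.card {T : GenomicTableau lam //
      (∀ x, InShape lam x → T.entry x ≤ n) ∧ ∀ k : Fin n, wt T (k : ℕ) = m k} : ℤ)

section RegularizationAux

open Relation

variable {lam : ℕ → ℕ}

theorem GenomicTableau.ext' {T U : GenomicTableau lam}
    (he : T.entry = U.entry) (hs : T.sameGene = U.sameGene) : T = U := by
  cases T; cases U
  simp only at he hs
  subst he; subst hs
  rfl

/-- The preconditions for a regularization step at label `i`. -/
def Applicable (T : GenomicTableau lam) (i : ℕ) : Prop :=
  2 ≤ i ∧ (∃ x, InShape lam x ∧ T.entry x = i) ∧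
    ∀ x y, InShape lam x → InShape lam y → T.entry x = i → T.entry y = i - 1 → y.2 < x.2

/-- The result of a regularization step at label `i`. -/
def stepTab (T : GenomicTableau lam) (i : ℕ) (h : Applicable T i) : GenomicTableau lam where
  entry x := if T.entry x = i then i - 1 else T.entry x
  sameGene := T.sameGene
  entry_pos x hx := by
    have := T.entry_pos x hx
    have h2 := h.1
    beta_reduce
    split_ifs <;> omega
  entry_zero x hx := by
    have := T.entry_zero x hx
    have h2 := h.1
    beta_reduce
    split_ifs <;> omega
  row_weak r c₁ c₂ hc hsh := by
    have := T.row_weak r c₁ c₂ hc hsh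
    have h2 := h.1
    beta_reduce
    split_ifs <;> omega
  col_strict r₁ r₂ c hr hsh := by
    have hlt := T.col_strict r₁ r₂ c hr hsh
    have h2 := h.1
    beta_reduce
    split_ifs with h1 hb hb
    · omega
    · omega
    · -- entry (r₁,c) ≠ i, entry (r₂,c) = i : goal entry (r₁,c) < i - 1
      rcases eq_or_ne (T.entry (r₁, c)) (i - 1) with he | he
      · by_cases hin : InShape lam (r₁, c)
        · have := h.2.2 (r₂, c) (r₁, c) hsh hin hb he
          simp at this
        · have := T.entry_zero _ hin; omega
      · omega
    · omega
  sameGene_mem := T.sameGene_mem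
  sameGene_refl := T.sameGene_refl
  sameGene_symm := T.sameGene_symm
  sameGene_trans := T.sameGene_trans
  sameGene_entry x y hxy := by
    simp only [T.sameGene_entry x y hxy]
  sameGene_interval x y z hxz hy hey hxy hyz := by
    have hx := (T.sameGene_mem x z hxz).1
    have hz := (T.sameGene_mem x z hxz).2
    have hez := T.sameGene_entry x z hxz
    have h2 := h.1
    beta_reduce at hey
    by_cases h1 : T.entry x = i
    · by_cases h3 : T.entry y = i
      · exact T.sameGene_interval x y z hxz hy (h3.trans h1.symm) hxy hyz
      · rw [if_pos h1, if_neg h3] at hey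
        have := h.2.2 x y hx hy h1 hey
        omega
    · by_cases h3 : T.entry y = i
      · rw [if_pos h3, if_neg h1] at hey
        have hez' : T.entry z = i - 1 := by omega
        have := h.2.2 y z hy hz h3 hez'
        omega
      · rw [if_neg h3, if_neg h1] at hey
        exact T.sameGene_interval x y z hxz hy hey hxy hyz
  sameGene_row := T.sameGene_row

theorem step_entry (T : GenomicTableau lam) (i : ℕ) (h : Applicable T i) (x : ℕ × ℕ) :
    (stepTab T i h).entry x = if T.entry x = i then i - 1 else T.entry x := rfl

theorem regStep_of_app {T : GenomicTableau lam} {i : ℕ} (h : Applicable T i) :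
    RegStep T (stepTab T i h) :=
  ⟨i, h.1, h.2.1, h.2.2, fun _ => rfl, fun _ _ => Iff.rfl⟩

theorem regStep_iff {T T' : GenomicTableau lam} :
    RegStep T T' ↔ ∃ i h, T' = stepTab T i h := by
  constructor
  · rintro ⟨i, h1, h2, h3, he, hs⟩
    refine ⟨i, ⟨h1, h2, h3⟩, GenomicTableau.ext' (funext he) ?_⟩
    funext x y
    exact propext (hs x y)
  · rintro ⟨i, h, rfl⟩
    exact regStep_of_app h

/-- The finite set of boxes of the shape. -/
noncomputable def shapeF (hlam : IsPartitionFn lam) : Finset (ℕ × ℕ) :=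
  (Finset.range hlam.2.choose ×ˢ Finset.range (lam 0)).filter fun x => x.2 < lam x.1

theorem mem_shapeF {hlam : IsPartitionFn lam} {x : ℕ × ℕ} :
    x ∈ shapeF hlam ↔ InShape lam x := by
  simp only [shapeF, Finset.mem_filter, Finset.mem_product, Finset.mem_range, InShape]
  constructor
  · exact fun h => h.2
  · intro h
    refine ⟨⟨?_, lt_of_lt_of_le h (hlam.1 (Nat.zero_le x.1))⟩, h⟩
    by_contra hc
    have := hlam.2.choose_spec x.1 (le_of_not_gt hc)
    omega

/-- Termination measure. -/
noncomputable def mu (hlam : IsPartitionFn lam) (T : GenomicTableau lam) : ℕ :=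
  ∑ x ∈ shapeF hlam, T.entry x

theorem mu_lt (hlam : IsPartitionFn lam) (T : GenomicTableau lam) (i : ℕ)
    (h : Applicable T i) : mu hlam (stepTab T i h) < mu hlam T := by
  apply Finset.sum_lt_sum
  · intro x _
    rw [step_entry]
    split_ifs <;> omega
  · obtain ⟨x, hx, he⟩ := h.2.1
    have h2 := h.1
    refine ⟨x, mem_shapeF.mpr hx, ?_⟩
    rw [step_entry, if_pos he, he]
    omega

theorem regStep_mu_lt (hlam : IsPartitionFn lam) {T T' : GenomicTableau lam}
    (h : RegStep T T') : mu hlam T' < mu hlam T := by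
  obtain ⟨i, hi, rfl⟩ := regStep_iff.mp h
  exact mu_lt hlam T i hi

theorem applicable_of_not_qy {T : GenomicTableau lam} (h : ¬ IsQY T) :
    ∃ i, Applicable T i := by
  simp only [IsQY] at h
  push_neg at h
  obtain ⟨i, h2, happ, hno⟩ := h
  refine ⟨i, h2, happ, fun x y hx hy hex hey => ?_⟩
  have := hno x y hx hy hex hey
  omega

theorem no_step_of_qy {T U : GenomicTableau lam} (hq : IsQY T) (h : RegStep T U) : False := by
  obtain ⟨i, hi, rfl⟩ := regStep_iff.mp h
  obtain ⟨x, y, hx, hy, hex, hey, hle⟩ := hq i hi.1 hi.2.1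
  have := hi.2.2 x y hx hy hex hey
  omega

theorem exists_qy (hlam : IsPartitionFn lam) :
    ∀ n (T : GenomicTableau lam), mu hlam T ≤ n →
      ∃ U, ReflTransGen RegStep T U ∧ IsQY U := by
  intro n
  induction n with
  | zero =>
    intro T hT
    by_cases hq : IsQY T
    · exact ⟨T, .refl, hq⟩
    · obtain ⟨i, hi⟩ := applicable_of_not_qy hq
      have := mu_lt hlam T i hi
      omega
  | succ n ih =>
    intro T hT
    by_cases hq : IsQY T
    · exact ⟨T, .refl, hq⟩
    · obtain ⟨i, hi⟩ := applicable_of_not_qy hq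
      obtain ⟨U, hU, hqU⟩ := ih (stepTab T i hi) (by have := mu_lt hlam T i hi; omega)
      exact ⟨U, .head (regStep_of_app hi) hU, hqU⟩

theorem confl_aux {T : GenomicTableau lam} {i j : ℕ} (hi : Applicable T i)
    (hj : Applicable T j) (hlt : j < i) :
    ∃ D, ReflTransGen RegStep (stepTab T i hi) D ∧
      ReflTransGen RegStep (stepTab T j hj) D := by
  have h2i := hi.1
  have h2j := hj.1
  rcases eq_or_lt_of_le (Nat.succ_le_of_lt hlt) with heq | hfar
  · -- adjacent case: j + 1 = i
    obtain ⟨w, hw, hwj⟩ := hj.2.1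
    have hAj : Applicable (stepTab T i hi) j := by
      refine ⟨h2j, ?_, ?_⟩
      · obtain ⟨x, hx, he⟩ := hi.2.1
        refine ⟨x, hx, ?_⟩
        rw [step_entry]
        split_ifs <;> omega
      · intro x y hx hy hex hey
        rw [step_entry] at hex hey
        have hy' : T.entry y = j - 1 := by split_ifs at hey <;> omega
        by_cases h1 : T.entry x = i
        · have h4 := hi.2.2 x w hx hw h1 (by omega)
          have h5 := hj.2.2 w y hw hy hwj hy'
          omega
        · rw [if_neg h1] at hex
          exact hj.2.2 x y hx hy hex hy'
    have hBi : Applicable (stepTab T j hj) i := by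
      refine ⟨h2i, ?_, ?_⟩
      · obtain ⟨x, hx, he⟩ := hi.2.1
        refine ⟨x, hx, ?_⟩
        rw [step_entry]
        split_ifs <;> omega
      · intro x y hx hy hex hey
        rw [step_entry] at hey
        split_ifs at hey <;> omega
    have hB1 : Applicable (stepTab (stepTab T j hj) i hBi) j := by
      refine ⟨h2j, ?_, ?_⟩
      · obtain ⟨x, hx, he⟩ := hi.2.1
        refine ⟨x, hx, ?_⟩
        rw [step_entry, step_entry]
        split_ifs <;> omega
      · intro x y hx hy hex hey
        rw [step_entry, step_entry] at hex hey
        have hx' : T.entry x = i := by split_ifs at hex <;> omega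
        by_cases h1 : T.entry y = j
        · have := hi.2.2 x y hx hy hx' (by omega)
          omega
        · have hy' : T.entry y = j - 1 := by split_ifs at hey <;> omega
          have h4 := hi.2.2 x w hx hw hx' (by omega)
          have h5 := hj.2.2 w y hw hy hwj hy'
          omega
    refine ⟨stepTab (stepTab T i hi) j hAj,
      ReflTransGen.single (regStep_of_app hAj), ?_⟩
    have heq2 : stepTab (stepTab (stepTab T j hj) i hBi) j hB1 =
        stepTab (stepTab T i hi) j hAj := by
      apply GenomicTableau.ext'
      · funext x
        simp only [step_entry]
        split_ifs <;> omega
      · rfl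
    exact heq2 ▸ ReflTransGen.head (regStep_of_app hBi)
      (ReflTransGen.single (regStep_of_app hB1))
  · -- far case: j + 1 < i
    have hAj : Applicable (stepTab T i hi) j := by
      refine ⟨h2j, ?_, ?_⟩
      · obtain ⟨x, hx, he⟩ := hj.2.1
        refine ⟨x, hx, ?_⟩
        rw [step_entry]
        split_ifs <;> omega
      · intro x y hx hy hex hey
        rw [step_entry] at hex hey
        have hx' : T.entry x = j := by split_ifs at hex <;> omega
        have hy' : T.entry y = j - 1 := by split_ifs at hey <;> omega
        exact hj.2.2 x y hx hy hx' hy'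
    have hBi : Applicable (stepTab T j hj) i := by
      refine ⟨h2i, ?_, ?_⟩
      · obtain ⟨x, hx, he⟩ := hi.2.1
        refine ⟨x, hx, ?_⟩
        rw [step_entry]
        split_ifs <;> omega
      · intro x y hx hy hex hey
        rw [step_entry] at hex hey
        have hx' : T.entry x = i := by split_ifs at hex <;> omega
        have hy' : T.entry y = i - 1 := by split_ifs at hey <;> omega
        exact hi.2.2 x y hx hy hx' hy'
    refine ⟨stepTab (stepTab T i hi) j hAj,
      ReflTransGen.single (regStep_of_app hAj), ?_⟩
    have heq2 : stepTab (stepTab T j hj) i hBi = stepTab (stepTab T i hi) j hAj := by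
      apply GenomicTableau.ext'
      · funext x
        simp only [step_entry]
        split_ifs <;> omega
      · rfl
    exact heq2 ▸ ReflTransGen.single (regStep_of_app hBi)

theorem confl {T A B : GenomicTableau lam} (hA : RegStep T A) (hB : RegStep T B) :
    ∃ D, ReflTransGen RegStep A D ∧ ReflTransGen RegStep B D := by
  obtain ⟨i, hi, rfl⟩ := regStep_iff.mp hA
  obtain ⟨j, hj, rfl⟩ := regStep_iff.mp hB
  rcases lt_trichotomy j i with h | h | h
  · exact confl_aux hi hj h
  · subst h
    exact ⟨stepTab T j hi, .refl, .refl⟩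
  · obtain ⟨D, h1, h2⟩ := confl_aux hj hi h
    exact ⟨D, h2, h1⟩

theorem unique_qy (hlam : IsPartitionFn lam) :
    ∀ n (T U V : GenomicTableau lam), mu hlam T ≤ n →
      ReflTransGen RegStep T U → IsQY U → ReflTransGen RegStep T V → IsQY V → U = V := by
  intro n
  induction n with
  | zero =>
    intro T U V hn hU hqU hV hqV
    rcases hU.cases_head with rfl | ⟨a, ha, _⟩
    · rcases hV.cases_head with rfl | ⟨b, hb, _⟩
      · rfl
      · exact absurd hb (fun h => no_step_of_qy hqU h)
    · have := regStep_mu_lt hlam ha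
      omega
  | succ n ih =>
    intro T U V hn hU hqU hV hqV
    rcases hU.cases_head with rfl | ⟨a, ha, hU'⟩
    · rcases hV.cases_head with rfl | ⟨b, hb, _⟩
      · rfl
      · exact absurd hb (fun h => no_step_of_qy hqU h)
    · rcases hV.cases_head with rfl | ⟨b, hb, hV'⟩
      · exact absurd ha (fun h => no_step_of_qy hqV h)
      · obtain ⟨d, hd1, hd2⟩ := confl ha hb
        obtain ⟨e, he, hqe⟩ := exists_qy hlam (mu hlam d) d le_rfl
        have h1 : U = e :=
          ih a U e (by have := regStep_mu_lt hlam ha; omega) hU' hqU (hd1.trans he) hqe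
        have h2 : V = e :=
          ih b V e (by have := regStep_mu_lt hlam hb; omega) hV' hqV (hd2.trans he) hqe
        rw [h1, h2]

end RegularizationAux

/-- **Lemma (well-definedness of regularization).** For any genomic tableau `T` of shape
`λ`, the regularization algorithm terminates with a well-defined output: there is a unique
quasiYamanouchi genomic tableau reachable from `T` by regularization steps.  In other
words, regularization is a well-defined map `reg : Gen(λ) → QYGen(λ)`. -/
theorem regularization_wellDefined (lam : ℕ → ℕ) (hlam : IsPartitionFn lam)
    (T : GenomicTableau lam) :
    ∃! U : GenomicTableau lam, Relation.ReflTransGen RegStep T U ∧ IsQY U := by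
  obtain ⟨U, hU, hq⟩ := exists_qy hlam (mu hlam T) T le_rfl
  refine ⟨U, ⟨hU, hq⟩, ?_⟩
  rintro V ⟨hV, hqV⟩
  exact unique_qy hlam (mu hlam T) T V U le_rfl hV hqV hU hq
end

section
/- The regularization map reg : Gen(λ) → QYGen(λ) is surjective, and its fixed points are exactly the quasiYamanouchi genomic tableaux: for T ∈ Gen(λ), reg(T) = T if and only if T ∈ QYGen(λ). -/
open scoped Classical

lemma no_regstep_of_isQY {lam : ℕ → ℕ} {T T' : GenomicTableau lam}
    (hQY : IsQY T) (h : RegStep T T') : False := by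
  obtain ⟨i, hi2, hex, hall, -, -⟩ := h
  obtain ⟨x, y, hx, hy, hex', hey, hxy⟩ := hQY i hi2 hex
  exact absurd hxy (not_le.mpr (hall x y hx hy hex' hey))

lemma eq_of_rtg_of_isQY {lam : ℕ → ℕ} {T U : GenomicTableau lam}
    (hQY : IsQY T) (h : Relation.ReflTransGen RegStep T U) : T = U := by
  rcases Relation.ReflTransGen.cases_head h with h | ⟨c, hc, -⟩
  · exact h
  · exact absurd hc (fun hc => no_regstep_of_isQY hQY hc)

/-- **Lemma.** The regularization map `reg : Gen(λ) → QYGen(λ)` (any map computing the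
regularization algorithm) is surjective onto the quasiYamanouchi genomic tableaux, and its
fixed points are exactly the quasiYamanouchi genomic tableaux. -/
theorem regularization_surjOn_and_fixedPoints (lam : ℕ → ℕ) (hlam : IsPartitionFn lam)
    (reg : GenomicTableau lam → GenomicTableau lam)
    (hreg : ∀ T, Relation.ReflTransGen RegStep T (reg T) ∧ IsQY (reg T)) :
    (∀ U : GenomicTableau lam, IsQY U → ∃ T, reg T = U) ∧
    (∀ T : GenomicTableau lam, reg T = T ↔ IsQY T) := by
  have fix : ∀ T : GenomicTableau lam, IsQY T → reg T = T := fun T hT =>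
    (eq_of_rtg_of_isQY hT (hreg T).1).symm
  refine ⟨fun U hU => ⟨U, fix U hU⟩, fun T => ⟨fun h => h ▸ (hreg T).2, fix T⟩⟩
end

section
/- If V is a genomic tableau of shape λ and U = reg(V), then the positive part wt(V)⁺ of the weight of V refines the weight wt(U) of U. -/
open scoped Classical

/-! ### Auxiliary lemmas -/

lemma refines_refl (β : List ℕ) : Refines β β := by
  refine ⟨β.map (fun x => [x]), ?_, ?_⟩
  · induction β with
    | nil => simp
    | cons a t ih => simp [ih]
  · induction β with
    | nil => simp
    | cons a t ih => simp [ih]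

lemma refines_group (L₂ : List (List ℕ)) : ∀ L₁ : List (List ℕ),
    L₂.flatten = L₁.map List.sum →
    ∃ M : List (List ℕ), M.flatten = L₁.flatten ∧ M.map List.sum = L₂.map List.sum := by
  induction L₂ with
  | nil =>
    intro L₁ h
    have : L₁ = [] := by simpa using List.map_eq_nil_iff.mp h.symm
    subst this
    exact ⟨[], by simp, by simp⟩
  | cons b rest ih =>
    intro L₁ h
    have h' : b ++ rest.flatten = L₁.map List.sum := by simpa using h
    have hb : b = (L₁.map List.sum).take b.length := by
      rw [← h']; simp
    have hr : rest.flatten = (L₁.map List.sum).drop b.length := by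
      rw [← h']; simp
    obtain ⟨M, hMf, hMs⟩ := ih (L₁.drop b.length) (by rw [hr, List.map_drop])
    refine ⟨(L₁.take b.length).flatten :: M, ?_, ?_⟩
    · have : (L₁.take b.length).flatten ++ (L₁.drop b.length).flatten = L₁.flatten := by
        rw [← List.flatten_append, List.take_append_drop]
      simp [hMf, this]
    · have hsum : (L₁.take b.length).flatten.sum = b.sum := by
        rw [List.sum_flatten, List.map_take, ← hb]
      simp [hMs, hsum]

lemma refines_trans {a b c : List ℕ} (h₁ : Refines a b) (h₂ : Refines b c) :
    Refines a c := by
  obtain ⟨L₁, hL₁f, hL₁s⟩ := h₁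
  obtain ⟨L₂, hL₂f, hL₂s⟩ := h₂
  obtain ⟨M, hMf, hMs⟩ := refines_group L₂ L₁ (by rw [hL₂f, hL₁s])
  exact ⟨M, by rw [hMf, hL₁f], by rw [hMs, hL₂s]⟩

lemma refines_append {a a' b b' : List ℕ} (ha : Refines a a') (hb : Refines b b') :
    Refines (a ++ b) (a' ++ b') := by
  obtain ⟨L, h1, h2⟩ := ha
  obtain ⟨K, h3, h4⟩ := hb
  exact ⟨L ++ K, by simp [h1, h3], by simp [h2, h4]⟩

/-- The list used in `wtPos`, with a general bound. -/
noncomputable def plist (f : ℕ → ℕ) (M : ℕ) : List ℕ :=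
  ((List.range M).map f).filter (fun e => decide (0 < e))

lemma plist_ext (f : ℕ → ℕ) (M M' : ℕ) (h : M ≤ M') (h0 : ∀ n, M ≤ n → f n = 0) :
    plist f M = plist f M' := by
  obtain ⟨k, rfl⟩ := Nat.exists_eq_add_of_le h
  unfold plist
  rw [List.range_add, List.map_append, List.filter_append]
  suffices hnil : (((List.range k).map (fun x => M + x)).map f).filter
      (fun e => decide (0 < e)) = [] by
    rw [hnil, List.append_nil]
  rw [List.filter_eq_nil_iff]
  intro a ha
  simp only [List.mem_map, List.mem_range] at ha
  obtain ⟨b, ⟨x, -, rfl⟩, rfl⟩ := ha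
  simp [h0 _ (Nat.le_add_right _ _)]

lemma refines_pair (u v : ℕ) :
    Refines (([u, v]).filter (fun e => decide (0 < e)))
      (([u + v, 0]).filter (fun e => decide (0 < e))) := by
  rcases Nat.eq_zero_or_pos u with hu | hu
  · subst hu
    have h1 : ([0, v]).filter (fun e => decide (0 < e))
        = ([v]).filter (fun e => decide (0 < e)) := by simp
    have h2 : ([0 + v, 0]).filter (fun e => decide (0 < e))
        = ([v]).filter (fun e => decide (0 < e)) := by
      rw [Nat.zero_add]; simp [List.filter_cons]
    rw [h1, h2]
    exact refines_refl _
  rcases Nat.eq_zero_or_pos v with hv | hv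
  · subst hv
    have h1 : ([u, 0]).filter (fun e => decide (0 < e))
        = ([u]).filter (fun e => decide (0 < e)) := by simp [List.filter_cons]
    have h2 : ([u + 0, 0]).filter (fun e => decide (0 < e))
        = ([u]).filter (fun e => decide (0 < e)) := by
      rw [Nat.add_zero]; exact h1
    rw [h1, h2]
    exact refines_refl _
  · have h1 : ([u, v]).filter (fun e => decide (0 < e)) = [u, v] := by simp [hu, hv]
    have h2 : ([u + v, 0]).filter (fun e => decide (0 < e)) = [u + v] := by
      simp [List.filter_cons]; omega
    rw [h1, h2]
    exact ⟨[[u, v]], by simp, by simp⟩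

lemma plist_step (f g : ℕ → ℕ) (j M : ℕ) (hM : j + 2 ≤ M)
    (hg : ∀ n, n ≠ j → n ≠ j + 1 → g n = f n)
    (hgj : g j = f j + f (j + 1)) (hgj1 : g (j + 1) = 0) :
    Refines (plist f M) (plist g M) := by
  obtain ⟨k, rfl⟩ := Nat.exists_eq_add_of_le hM
  unfold plist
  rw [List.range_add]
  have hr : List.range (j + 2) = List.range j ++ [j, j + 1] := by
    rw [List.range_succ, List.range_succ]
    simp
  rw [hr, List.append_assoc]
  simp only [List.map_append, List.filter_append]
  apply refines_append
  · have : (List.range j).map g = (List.range j).map f := by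
      apply List.map_congr_left
      intro n hn
      simp only [List.mem_range] at hn
      exact hg n (by omega) (by omega)
    rw [this]
    exact refines_refl _
  apply refines_append
  · have hp := refines_pair (f j) (f (j + 1))
    simp only [List.map_cons, List.map_nil, hgj, hgj1]
    exact hp
  · have : (((List.range k).map (fun x => j + 2 + x)).map g)
        = (((List.range k).map (fun x => j + 2 + x)).map f) := by
      apply List.map_congr_left
      intro n hn
      simp only [List.mem_map, List.mem_range] at hn
      obtain ⟨x, -, rfl⟩ := hn
      exact hg _ (by omega) (by omega)
    rw [this]
    exact refines_refl _

lemma shape_finite (lam : ℕ → ℕ) (hlam : IsPartitionFn lam) :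
    {x : ℕ × ℕ | InShape lam x}.Finite := by
  obtain ⟨hmono, N, hN⟩ := hlam
  apply Set.Finite.subset ((Set.finite_Iio N).prod (Set.finite_Iio (lam 0)))
  rintro ⟨r, c⟩ hx
  simp only [InShape, Set.mem_setOf_eq] at hx
  constructor
  · by_contra hcon
    simp only [Set.mem_Iio, not_lt] at hcon
    rw [hN r hcon] at hx
    omega
  · exact lt_of_lt_of_le hx (hmono (Nat.zero_le r))

lemma entry_le_maxEntry {lam : ℕ → ℕ} (hlam : IsPartitionFn lam)
    (T : GenomicTableau lam) (x : ℕ × ℕ) (hx : InShape lam x) :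
    T.entry x ≤ maxEntry T := by
  have hfin : {n | ∃ y, InShape lam y ∧ T.entry y = n}.Finite := by
    have himg : {n | ∃ y, InShape lam y ∧ T.entry y = n}
        = T.entry '' {y | InShape lam y} := by
      ext n
      simp [Set.mem_image, Set.mem_setOf_eq]
    rw [himg]
    exact (shape_finite lam hlam).image _
  exact le_csSup hfin.bddAbove ⟨x, hx, rfl⟩

lemma wt_eq_zero {lam : ℕ → ℕ} (hlam : IsPartitionFn lam)
    (T : GenomicTableau lam) (n : ℕ) (h : maxEntry T ≤ n) : wt T n = 0 := by
  unfold wt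
  have : {x | IsGeneLeader T x ∧ T.entry x = n + 1} = ∅ := by
    ext x
    simp only [Set.mem_setOf_eq, Set.mem_empty_iff_false, iff_false, not_and]
    intro hl he
    have := entry_le_maxEntry hlam T x hl.1
    omega
  simp [this]

lemma refines_of_regStep {lam : ℕ → ℕ} (hlam : IsPartitionFn lam)
    {T T' : GenomicTableau lam} (h : RegStep T T') :
    Refines (wtPos T) (wtPos T') := by
  obtain ⟨i, hi2, hex, hsep, hent, hgene⟩ := h
  obtain ⟨k, rfl⟩ : ∃ k, i = k + 2 := ⟨i - 2, by omega⟩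
  have hleader : ∀ x, IsGeneLeader T' x ↔ IsGeneLeader T x := by
    intro x
    unfold IsGeneLeader
    simp [hgene]
  -- wt T' n for n ≠ k, k+1
  have hsame : ∀ n, n ≠ k → n ≠ k + 1 → wt T' n = wt T n := by
    intro n h1 h2
    unfold wt
    congr 1
    ext x
    simp only [Set.mem_setOf_eq, hleader, hent]
    constructor
    · rintro ⟨hl, he⟩
      refine ⟨hl, ?_⟩
      by_cases hc : T.entry x = k + 2
      · rw [if_pos hc] at he; omega
      · rwa [if_neg hc] at he
    · rintro ⟨hl, he⟩
      refine ⟨hl, ?_⟩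
      by_cases hc : T.entry x = k + 2
      · omega
      · rwa [if_neg hc]
  have hzero : wt T' (k + 1) = 0 := by
    unfold wt
    have : {x | IsGeneLeader T' x ∧ T'.entry x = k + 1 + 1} = ∅ := by
      ext x
      simp only [Set.mem_setOf_eq, Set.mem_empty_iff_false, iff_false, not_and]
      intro hl he
      rw [hent] at he
      by_cases hc : T.entry x = k + 2
      · rw [if_pos hc] at he; omega
      · rw [if_neg hc] at he; omega
    simp [this]
  have hmerge : wt T' k = wt T k + wt T (k + 1) := by
    unfold wt
    have hset : {x | IsGeneLeader T' x ∧ T'.entry x = k + 1}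
        = {x | IsGeneLeader T x ∧ T.entry x = k + 1}
          ∪ {x | IsGeneLeader T x ∧ T.entry x = k + 1 + 1} := by
      ext x
      simp only [Set.mem_setOf_eq, Set.mem_union, hleader, hent]
      constructor
      · rintro ⟨hl, he⟩
        by_cases hc : T.entry x = k + 2
        · exact Or.inr ⟨hl, by omega⟩
        · rw [if_neg hc] at he
          exact Or.inl ⟨hl, he⟩
      · rintro (⟨hl, he⟩ | ⟨hl, he⟩)
        · exact ⟨hl, by rw [if_neg (by omega)]; exact he⟩
        · refine ⟨hl, ?_⟩
          rw [if_pos (show T.entry x = k + 2 by omega)]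
          omega
    rw [hset]
    have hfin1 : {x | IsGeneLeader T x ∧ T.entry x = k + 1}.Finite :=
      (shape_finite lam hlam).subset (fun x hx => hx.1.1)
    have hfin2 : {x | IsGeneLeader T x ∧ T.entry x = k + 1 + 1}.Finite :=
      (shape_finite lam hlam).subset (fun x hx => hx.1.1)
    rw [Set.ncard_union_eq ?_ hfin1 hfin2]
    · rw [Set.disjoint_left]
      rintro x ⟨-, h1⟩ ⟨-, h2⟩
      omega
  set M := max (maxEntry T) (max (maxEntry T') (k + 2)) with hM
  have h1 : wtPos T = plist (wt T) M := by
    have : wtPos T = plist (wt T) (maxEntry T) := rfl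
    rw [this]
    exact plist_ext _ _ _ (le_max_left _ _) (fun n hn => wt_eq_zero hlam T n hn)
  have h2 : wtPos T' = plist (wt T') M := by
    have : wtPos T' = plist (wt T') (maxEntry T') := rfl
    rw [this]
    exact plist_ext _ _ _ (le_trans (le_max_left _ _) (le_max_right _ _))
      (fun n hn => wt_eq_zero hlam T' n hn)
  rw [h1, h2]
  exact plist_step (wt T) (wt T') k M
    (le_trans (le_max_right _ _) (le_max_right _ _))
    (fun n hn1 hn2 => hsame n hn1 hn2) hmerge hzero

/-- **Lemma.** If `V` is a genomic tableau of shape `λ` and `U = reg(V)`, then the positive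
part `wt(V)⁺` of the weight of `V` refines the weight `wt(U)` of `U`. -/
theorem wtPos_refines_of_regularization (lam : ℕ → ℕ) (hlam : IsPartitionFn lam)
    (reg : GenomicTableau lam → GenomicTableau lam)
    (hreg : ∀ T, Relation.ReflTransGen RegStep T (reg T) ∧ IsQY (reg T))
    (V : GenomicTableau lam) :
    Refines (wtPos V) (wtPos (reg V)) := by
  have h := (hreg V).1
  obtain ⟨U, hU⟩ : ∃ U, U = reg V := ⟨reg V, rfl⟩
  rw [← hU] at h ⊢
  clear hU hreg
  induction h with
  | refl => exact refines_refl _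
  | tail _ hstep ih => exact refines_trans ih (refines_of_regStep hlam hstep)
end
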